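/- Let a > b > 0 with a² > 2b², c² = a² − b², and |u| ≤ (a/c²)·√(a² − 2b²). Define the four points P₁ = (a·u, b·√(1−u²)), P₃ = (−a·u, b·√(1−u²)), P₂ = (−(a/(c²√(1−u²)))·√(a²(a²−2b²) − c⁴u²), −b³/(c²√(1−u²))), P₄ = ((a/(c²√(1−u²)))·√(a²(a²−2b²) − c⁴u²), −b³/(c²√(1−u²))). Then the perimeter |P₁P₂| + |P₂P₃| + |P₃P₄| + |P₄P₁| equals 4a²/c, independent of u. -/

import Mathlib

/-- Euclidean distance between two points of the plane `ℝ × ℝ`. -/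
noncomputable def edist' (p q : ℝ × ℝ) : ℝ :=
  Real.sqrt ((p.1 - q.1)^2 + (p.2 - q.2)^2)

private lemma aux_arg (a b c u s w : ℝ) (hsne : s ≠ 0) (hcne : c ≠ 0)
    (hs2 : s^2 = 1 - u^2) (hw2 : w^2 = a^2*(a^2 - 2*b^2) - c^4*u^2)
    (hc2 : c^2 = a^2 - b^2) :
    (a*u + (a/(c^2*s))*w)^2 + (b*s + b^3/(c^2*s))^2 = ((a^2*s + u*w)/(c*s))^2 := by
  have hbb : b^2 + c^2*s^2 = a^2 - c^2*u^2 := by linear_combination c^2*hs2 + hc2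
  have key : a^2*(c^2*u*s+w)^2 + b^2*(a^2-c^2*u^2)^2 = c^2*(a^2*s+u*w)^2 := by
    linear_combination (a^2 - c^2*u^2) * hw2 + a^2*c^2*(c^2*u^2 - a^2) * hs2 +
      (u^4*c^4 - a^4) * hc2
  field_simp
  linear_combination key +
    b^2*((b^2 + c^2*s^2) + (a^2 - c^2*u^2)) * hbb

/-- The perimeter of the self-intersected billiard 4-periodic equals `4a²/c`,
independently of the parameter `u`. -/
theorem perimeter_self_intersected_4periodic
    (a b c u : ℝ) (hab : a > b) (hb : b > 0) (h2 : a^2 > 2*b^2)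
    (hc : c > 0) (hc2 : c^2 = a^2 - b^2)
    (hu : |u| ≤ (a / c^2) * Real.sqrt (a^2 - 2*b^2)) :
    let s := Real.sqrt (1 - u^2)
    let w := Real.sqrt (a^2*(a^2 - 2*b^2) - c^4*u^2)
    let P1 : ℝ × ℝ := (a*u, b*s)
    let P3 : ℝ × ℝ := (-(a*u), b*s)
    let P2 : ℝ × ℝ := (-((a/(c^2*s))*w), -(b^3/(c^2*s)))
    let P4 : ℝ × ℝ := ((a/(c^2*s))*w, -(b^3/(c^2*s)))
    edist' P1 P2 + edist' P2 P3 + edist' P3 P4 + edist' P4 P1 = 4*a^2/c := by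
  intro s w P1 P3 P2 P4
  have ha : (0:ℝ) < a := lt_trans hb hab
  have hWnn : (0:ℝ) ≤ a^2 - 2*b^2 := le_of_lt (by linarith)
  -- bound on u²
  have hu2 : c^4 * u^2 ≤ a^2 * (a^2 - 2*b^2) := by
    have h1 : |u| * |u| ≤ ((a / c^2) * Real.sqrt (a^2 - 2*b^2)) *
        ((a / c^2) * Real.sqrt (a^2 - 2*b^2)) :=
      mul_self_le_mul_self (abs_nonneg u) hu
    have h3 : Real.sqrt (a^2 - 2*b^2) * Real.sqrt (a^2 - 2*b^2) = a^2 - 2*b^2 :=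
      Real.mul_self_sqrt hWnn
    have h4 : u^2 ≤ a^2 / c^4 * (a^2 - 2*b^2) := by
      calc u^2 = |u| * |u| := by rw [abs_mul_abs_self]; ring
        _ ≤ (a / c^2) * Real.sqrt (a^2 - 2*b^2) * ((a / c^2) * Real.sqrt (a^2 - 2*b^2)) := h1
        _ = a^2 / c^4 * (a^2 - 2*b^2) := by
            rw [show (a / c^2) * Real.sqrt (a^2 - 2*b^2) * ((a / c^2) * Real.sqrt (a^2 - 2*b^2))
              = (a/c^2) * (a/c^2) * (Real.sqrt (a^2 - 2*b^2) * Real.sqrt (a^2 - 2*b^2)) by ring,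
              h3]
            field_simp
    have hc4 : (0:ℝ) < c^4 := by positivity
    calc c^4 * u^2 ≤ c^4 * (a^2 / c^4 * (a^2 - 2*b^2)) :=
          mul_le_mul_of_nonneg_left h4 (le_of_lt hc4)
      _ = a^2 * (a^2 - 2*b^2) := by field_simp
  have hkey : a^2*(a^2 - 2*b^2) = c^4 - b^4 := by
    linear_combination (-(c^2 + a^2 - b^2)) * hc2
  have hu1 : u^2 < 1 := by nlinarith [hu2, hkey, pow_pos hb 4, pow_pos hc 4]
  have hs : 0 < s := Real.sqrt_pos.mpr (by linarith)
  have hs2 : s^2 = 1 - u^2 := Real.sq_sqrt (by linarith)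
  have hw0 : 0 ≤ w := Real.sqrt_nonneg _
  have hw2 : w^2 = a^2*(a^2 - 2*b^2) - c^4*u^2 := Real.sq_sqrt (by linarith)
  have hsne : s ≠ 0 := ne_of_gt hs
  have hcne : c ≠ 0 := ne_of_gt hc
  -- nonnegativity of the two distance values
  have hdiff : (a^2*s)^2 - (u*w)^2 = (a^2 - c^2*u^2)^2 := by
    have h : (a^2*s)^2 - (u*w)^2 = a^4*s^2 - u^2*w^2 := by ring
    rw [h, hs2, hw2]; linear_combination 2*a^2*u^2*hc2
  have hasn : 0 < a^2 * s := by positivity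
  have hnn1 : 0 ≤ a^2*s + u*w := by nlinarith [hdiff, hasn]
  have hnn2 : 0 ≤ a^2*s - u*w := by nlinarith [hdiff, hasn]
  have hcs : (0:ℝ) < c*s := by positivity
  -- the two auxiliary argument identities
  have arg1 := aux_arg a b c u s w hsne hcne hs2 hw2 hc2
  have arg2 := aux_arg a b c (-u) s w hsne hcne (by rw [hs2]; ring)
    (by rw [hw2]; ring) hc2
  -- the four distances
  have e12 : edist' P1 P2 = (a^2*s + u*w)/(c*s) := by
    show Real.sqrt ((a*u - -((a/(c^2*s))*w))^2 + (b*s - -(b^3/(c^2*s)))^2) = _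
    rw [show (a*u - -((a/(c^2*s))*w))^2 + (b*s - -(b^3/(c^2*s)))^2
        = (a*u + (a/(c^2*s))*w)^2 + (b*s + b^3/(c^2*s))^2 by ring, arg1]
    exact Real.sqrt_sq (div_nonneg hnn1 (le_of_lt hcs))
  have e23 : edist' P2 P3 = (a^2*s - u*w)/(c*s) := by
    show Real.sqrt ((-((a/(c^2*s))*w) - -(a*u))^2 + (-(b^3/(c^2*s)) - b*s)^2) = _
    rw [show (-((a/(c^2*s))*w) - -(a*u))^2 + (-(b^3/(c^2*s)) - b*s)^2
        = (a*(-u) + (a/(c^2*s))*w)^2 + (b*s + b^3/(c^2*s))^2 by ring, arg2]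
    rw [show (a^2*s + -u*w)/(c*s) = (a^2*s - u*w)/(c*s) by ring]
    exact Real.sqrt_sq (div_nonneg hnn2 (le_of_lt hcs))
  have e34 : edist' P3 P4 = (a^2*s + u*w)/(c*s) := by
    show Real.sqrt ((-(a*u) - (a/(c^2*s))*w)^2 + (b*s - -(b^3/(c^2*s)))^2) = _
    rw [show (-(a*u) - (a/(c^2*s))*w)^2 + (b*s - -(b^3/(c^2*s)))^2
        = (a*u + (a/(c^2*s))*w)^2 + (b*s + b^3/(c^2*s))^2 by ring, arg1]
    exact Real.sqrt_sq (div_nonneg hnn1 (le_of_lt hcs))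
  have e41 : edist' P4 P1 = (a^2*s - u*w)/(c*s) := by
    show Real.sqrt (((a/(c^2*s))*w - a*u)^2 + (-(b^3/(c^2*s)) - b*s)^2) = _
    rw [show ((a/(c^2*s))*w - a*u)^2 + (-(b^3/(c^2*s)) - b*s)^2
        = (a*(-u) + (a/(c^2*s))*w)^2 + (b*s + b^3/(c^2*s))^2 by ring, arg2]
    rw [show (a^2*s + -u*w)/(c*s) = (a^2*s - u*w)/(c*s) by ring]
    exact Real.sqrt_sq (div_nonneg hnn2 (le_of_lt hcs))
  rw [e12, e23, e34, e41]
  field_simp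
  ring
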